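/- The set A = {n ∈ ℕ : the base-3 expansion of 2^n contains at least one digit equal to 0} has asymptotic density 1; that is, (1/N)·#{0 ≤ n < N : the base-3 expansion of 2^n contains the digit 0} → 1 as N → ∞. Equivalently, the set {n : S_3(2^n) = 0} has asymptotic density 1. -/

import Mathlib

open Filter

/-- The Sloane map in base `q`: the product of the base-`q` digits of `n`
(with `S_q(0) = 0`). -/
def sloane (q n : ℕ) : ℕ := if n = 0 then 0 else (Nat.digits q n).prod

/-- `2 ^ (2·3^k) = 1 + c·3^(k+1)` with `3 ∤ c`. -/
lemma two_pow_eq (k : ℕ) : ∃ c : ℕ, 2 ^ (2 * 3 ^ k) = 1 + c * 3 ^ (k+1) ∧ ¬ 3 ∣ c := by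
  induction k with
  | zero => exact ⟨1, by norm_num⟩
  | succ k ih =>
    obtain ⟨c, hc, h3⟩ := ih
    refine ⟨c + c^2 * 3^(k+1) + c^3 * 3^(2*k+1), ?_, ?_⟩
    · have : 2 * 3 ^ (k+1) = (2 * 3 ^ k) * 3 := by ring
      rw [this, pow_mul, hc]
      ring
    · intro h
      apply h3
      have h1 : (3:ℕ) ∣ c ^ 2 * 3 ^ (k + 1) + c ^ 3 * 3 ^ (2 * k + 1) := by
        have a1 : (3:ℕ) ∣ 3 ^ (k + 1) := dvd_pow_self 3 (Nat.succ_ne_zero k)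
        have a2 : (3:ℕ) ∣ 3 ^ (2 * k + 1) := dvd_pow_self 3 (by omega)
        exact (a1.mul_left _).add (a2.mul_left _)
      rw [add_assoc, add_comm] at h
      exact (Nat.dvd_add_right h1).mp h

lemma orderOf_two_zmod (k : ℕ) : orderOf (2 : ZMod (3 ^ (k + 1))) = 2 * 3 ^ k := by
  have hm : (1:ℕ) < 3 ^ (k+1) := Nat.one_lt_pow (Nat.succ_ne_zero k) (by norm_num)
  have key : ∀ j c : ℕ, ¬ 3 ∣ c → 2 ^ (2 * 3 ^ j) = 1 + c * 3 ^ (j+1) → j < k →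
      (2 : ZMod (3 ^ (k+1))) ^ (2 * 3 ^ j) ≠ 1 := by
    intro j c h3 hc hjk h1
    have : ((2 ^ (2 * 3 ^ j) : ℕ) : ZMod (3 ^ (k+1))) = ((1 : ℕ) : ZMod (3 ^ (k+1))) := by
      push_cast; simpa using h1
    rw [ZMod.natCast_eq_natCast_iff, hc] at this
    have hd : 3 ^ (k+1) ∣ c * 3 ^ (j+1) := by
      have := (Nat.modEq_iff_dvd' (Nat.le_add_right 1 _)).mp this.symm
      simpa using this
    have hd2 : 3 ^ (j+2) ∣ c * 3 ^ (j+1) :=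
      dvd_trans (pow_dvd_pow 3 (by omega)) hd
    rw [pow_succ' 3 (j+1), Nat.mul_dvd_mul_iff_right (pow_pos (by norm_num) (j+1))] at hd2
    exact h3 hd2
  obtain ⟨c, hc, h3⟩ := two_pow_eq k
  have hT : (2 : ZMod (3 ^ (k+1))) ^ (2 * 3 ^ k) = 1 := by
    have h0' : (3 : ZMod (3 ^ (k+1))) ^ (k+1) = 0 := by
      have h := ZMod.natCast_self (3 ^ (k+1))
      push_cast at h
      exact h
    have h1 : ((2 ^ (2 * 3 ^ k) : ℕ) : ZMod (3 ^ (k+1))) = ((1 + c * 3 ^ (k+1) : ℕ) : ZMod (3 ^ (k+1))) := by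
      exact_mod_cast congrArg _ hc
    push_cast at h1
    rw [h0', mul_zero, add_zero] at h1
    exact h1
  refine orderOf_eq_of_pow_and_pow_div_prime (by positivity) hT ?_
  intro p hp hpd
  rcases (Nat.Prime.dvd_mul hp).mp hpd with h2 | h3p
  · -- p = 2
    have hp2 : p = 2 := (Nat.prime_dvd_prime_iff_eq hp Nat.prime_two).mp h2
    subst hp2
    rw [Nat.mul_div_cancel_left _ (by norm_num)]
    intro h1
    have : ((2 : ZMod (3 ^ (k+1))) ^ 3 ^ k : ZMod (3^(k+1))) = 1 := h1
    have hmap := congrArg (ZMod.castHom (dvd_pow_self 3 (Nat.succ_ne_zero k)) (ZMod 3)) this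
    rw [map_pow, map_one] at hmap
    have h2 : (ZMod.castHom (dvd_pow_self 3 (Nat.succ_ne_zero k)) (ZMod 3)) (2 : ZMod (3^(k+1))) = (2 : ZMod 3) := by
      rw [map_ofNat]
    rw [h2] at hmap
    have hodd : Odd (3 ^ k) := Odd.pow (by decide)
    have : (2 : ZMod 3) = -1 := by decide
    rw [this, hodd.neg_one_pow] at hmap
    exact absurd hmap (by decide)
  · -- p = 3
    have hp3 : p = 3 := (Nat.prime_dvd_prime_iff_eq hp Nat.prime_three).mp
      (hp.dvd_of_dvd_pow h3p)
    subst hp3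
    have hk : k ≠ 0 := by
      rintro rfl; revert h3p; decide
    obtain ⟨j, rfl⟩ := Nat.exists_eq_succ_of_ne_zero hk
    have hdiv : 2 * 3 ^ (j+1) / 3 = 2 * 3 ^ j := by
      rw [pow_succ, ← mul_assoc, Nat.mul_div_cancel _ (by norm_num)]
    rw [hdiv]
    obtain ⟨c', hc', h3'⟩ := two_pow_eq j
    exact key j c' h3' hc' (Nat.lt_succ_self j)

/-- If no base-3 digit of `N` is zero, every "digit" `N / 3^i % 3` with `N / 3^i > 0`
is nonzero. -/
lemma digit_ne_zero : ∀ (i N : ℕ), 0 ∉ Nat.digits 3 N → 0 < N / 3 ^ i → N / 3 ^ i % 3 ≠ 0 := by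
  intro i
  induction i with
  | zero =>
    intro N h0 hpos
    rw [pow_zero, Nat.div_one] at hpos ⊢
    rw [Nat.digits_def' (by norm_num : (1:ℕ) < 3) hpos] at h0
    intro h
    exact h0 (h ▸ List.mem_cons_self)
  | succ i ih =>
    intro N h0 hpos
    have hN : 0 < N := lt_of_lt_of_le hpos (Nat.div_le_self N _)
    rw [Nat.digits_def' (by norm_num : (1:ℕ) < 3) hN] at h0
    have h0' : 0 ∉ Nat.digits 3 (N / 3) := fun h => h0 (List.mem_cons_of_mem _ h)
    have hdd : N / 3 ^ (i + 1) = N / 3 / 3 ^ i := by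
      rw [Nat.div_div_eq_div_mul, ← pow_succ']
    rw [hdd] at hpos ⊢
    exact ih (N / 3) h0' hpos

/-- A number `< 3^k` is determined by its `k` lowest base-3 digits. -/
lemma eq_of_digits_eq : ∀ (k r s : ℕ), r < 3 ^ k → s < 3 ^ k →
    (∀ i < k, r / 3 ^ i % 3 = s / 3 ^ i % 3) → r = s := by
  intro k
  induction k with
  | zero => intro r s hr hs _; simp at hr hs; omega
  | succ k ih =>
    intro r s hr hs h
    have h0 : r % 3 = s % 3 := by simpa using h 0 (Nat.succ_pos k)
    have hdiv : r / 3 = s / 3 := by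
      refine ih (r / 3) (s / 3) ?_ ?_ ?_
      · exact Nat.div_lt_of_lt_mul (by rw [← pow_succ']; exact hr)
      · exact Nat.div_lt_of_lt_mul (by rw [← pow_succ']; exact hs)
      · intro i hi
        have := h (i + 1) (by omega)
        rwa [pow_succ', ← Nat.div_div_eq_div_mul, ← Nat.div_div_eq_div_mul] at this
    omega

/-- At most `2^k` numbers `< 3^k` have all of their `k` lowest digits nonzero. -/
lemma card_nonzero_digits (k : ℕ) :
    ((Finset.range (3 ^ k)).filter (fun r => ∀ i < k, r / 3 ^ i % 3 ≠ 0)).card ≤ 2 ^ k := by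
  have hinj : Set.InjOn (fun r => (fun i : Fin k => (if r / 3 ^ (i : ℕ) % 3 = 1 then 0 else 1 : Fin 2)))
      ((Finset.range (3 ^ k)).filter (fun r => ∀ i < k, r / 3 ^ i % 3 ≠ 0)) := by
    intro r hr s hs hfs
    simp only [Finset.mem_coe, Finset.mem_filter, Finset.mem_range] at hr hs
    refine eq_of_digits_eq k r s hr.1 hs.1 ?_
    intro i hi
    have hri : r / 3 ^ i % 3 ≠ 0 := hr.2 i hi
    have hsi : s / 3 ^ i % 3 ≠ 0 := hs.2 i hi
    have hr3 : r / 3 ^ i % 3 < 3 := Nat.mod_lt _ (by norm_num)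
    have hs3 : s / 3 ^ i % 3 < 3 := Nat.mod_lt _ (by norm_num)
    have := congrFun hfs ⟨i, hi⟩
    simp only at this
    by_cases h1 : r / 3 ^ i % 3 = 1 <;> by_cases h2 : s / 3 ^ i % 3 = 1 <;>
      simp [h1, h2] at this ⊢ <;> omega
  calc ((Finset.range (3 ^ k)).filter (fun r => ∀ i < k, r / 3 ^ i % 3 ≠ 0)).card
      ≤ (Finset.univ : Finset (Fin k → Fin 2)).card :=
        Finset.card_le_card_of_injOn _ (fun r _ => Finset.mem_univ _) hinj
    _ = 2 ^ k := by simp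

/-- Periodicity: `2^n mod 3^(k+1)` depends only on `n mod 2·3^k`. -/
lemma pow_two_mod_period (k n : ℕ) :
    2 ^ n % 3 ^ (k + 1) = 2 ^ (n % (2 * 3 ^ k)) % 3 ^ (k + 1) := by
  have hm : (1:ℕ) < 3 ^ (k+1) := Nat.one_lt_pow (Nat.succ_ne_zero k) (by norm_num)
  have hT : (2 : ZMod (3 ^ (k + 1))) ^ (2 * 3 ^ k) = 1 := by
    rw [← orderOf_two_zmod k]; exact pow_orderOf_eq_one _
  have hz : (2 : ZMod (3 ^ (k + 1))) ^ n = (2 : ZMod (3 ^ (k + 1))) ^ (n % (2 * 3 ^ k)) := by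
    calc (2 : ZMod (3 ^ (k + 1))) ^ n
        = ((2 : ZMod (3 ^ (k + 1))) ^ (2 * 3 ^ k)) ^ (n / (2 * 3 ^ k)) * 2 ^ (n % (2 * 3 ^ k)) := by
          rw [← pow_mul, ← pow_add, Nat.div_add_mod]
      _ = (2 : ZMod (3 ^ (k + 1))) ^ (n % (2 * 3 ^ k)) := by rw [hT, one_pow, one_mul]
  have hcast : ((2 ^ n : ℕ) : ZMod (3 ^ (k + 1))) = ((2 ^ (n % (2 * 3 ^ k)) : ℕ) : ZMod (3 ^ (k + 1))) := by
    push_cast; exact hz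
  exact (ZMod.natCast_eq_natCast_iff _ _ _).mp hcast

/-- Injectivity of `j ↦ 2^j mod 3^(k+1)` on one period. -/
lemma pow_two_mod_inj (k : ℕ) {j₁ j₂ : ℕ} (h₁ : j₁ < 2 * 3 ^ k) (h₂ : j₂ < 2 * 3 ^ k)
    (h : 2 ^ j₁ % 3 ^ (k + 1) = 2 ^ j₂ % 3 ^ (k + 1)) : j₁ = j₂ := by
  have hz : (2 : ZMod (3 ^ (k + 1))) ^ j₁ = (2 : ZMod (3 ^ (k + 1))) ^ j₂ := by
    have := (ZMod.natCast_eq_natCast_iff (2 ^ j₁) (2 ^ j₂) (3 ^ (k+1))).mpr h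
    push_cast at this; exact this
  have := pow_injOn_Iio_orderOf (x := (2 : ZMod (3 ^ (k + 1))))
    (by rw [orderOf_two_zmod k]; exact h₁) (by rw [orderOf_two_zmod k]; exact h₂) hz
  exact this

/-- The main counting bound. -/
lemma main_bound (k N : ℕ) :
    ((Finset.range N).filter
        (fun n => ∀ i < k + 1, 2 ^ n % 3 ^ (k + 1) / 3 ^ i % 3 ≠ 0)).card
      ≤ (N / (2 * 3 ^ k) + 1) * 2 ^ (k + 1) := by
  set T := 2 * 3 ^ k with hTdef
  have hT0 : 0 < T := by positivity
  set P : ℕ → Prop := fun r => ∀ i < k + 1, r / 3 ^ i % 3 ≠ 0 with hP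
  -- the set of residue-exponents in one period
  have step2 : ((Finset.range T).filter (fun j => P (2 ^ j % 3 ^ (k + 1)))).card ≤ 2 ^ (k + 1) := by
    have hinj : Set.InjOn (fun j => 2 ^ j % 3 ^ (k + 1))
        ((Finset.range T).filter (fun j => P (2 ^ j % 3 ^ (k + 1)))) := by
      intro a ha b hb hab
      simp only [Finset.coe_filter, Set.mem_setOf_eq, Finset.mem_range] at ha hb
      exact pow_two_mod_inj k ha.1 hb.1 hab
    calc ((Finset.range T).filter (fun j => P (2 ^ j % 3 ^ (k + 1)))).card
        ≤ ((Finset.range (3 ^ (k + 1))).filter P).card := by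
          refine Finset.card_le_card_of_injOn _ ?_ hinj
          intro j hj
          simp only [Finset.mem_coe, Finset.mem_filter, Finset.mem_range] at hj ⊢
          exact ⟨Nat.mod_lt _ (by positivity), hj.2⟩
      _ ≤ 2 ^ (k + 1) := card_nonzero_digits (k + 1)
  -- split range N into blocks of length T
  have step1 : ((Finset.range N).filter (fun n => P (2 ^ n % 3 ^ (k + 1)))).card
      ≤ ((Finset.range (N / T + 1)) ×ˢ ((Finset.range T).filter (fun j => P (2 ^ j % 3 ^ (k + 1))))).card := by
    refine Finset.card_le_card_of_injOn (fun n => (n / T, n % T)) ?_ ?_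
    · intro n hn
      simp only [Finset.mem_coe, Finset.mem_filter, Finset.mem_range] at hn
      simp only [Finset.mem_coe, Finset.mem_product, Finset.mem_filter, Finset.mem_range]
      refine ⟨by have : n / T ≤ N / T := Nat.div_le_div_right (le_of_lt hn.1); omega,
        Nat.mod_lt _ hT0, ?_⟩
      have := hn.2
      rwa [pow_two_mod_period k n] at this
    · intro a _ b _ hab
      simp only [Prod.mk.injEq] at hab
      calc a = T * (a / T) + a % T := (Nat.div_add_mod a T).symm
        _ = T * (b / T) + b % T := by rw [hab.1, hab.2]
        _ = b := Nat.div_add_mod b T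
  calc ((Finset.range N).filter (fun n => P (2 ^ n % 3 ^ (k + 1)))).card
      ≤ _ := step1
    _ = (N / T + 1) * ((Finset.range T).filter (fun j => P (2 ^ j % 3 ^ (k + 1)))).card := by
        rw [Finset.card_product, Finset.card_range]
    _ ≤ (N / T + 1) * 2 ^ (k + 1) := Nat.mul_le_mul_left _ step2

lemma mod_digit (a K i : ℕ) (h : i < K) : a % 3 ^ K / 3 ^ i % 3 = a / 3 ^ i % 3 := by
  rw [← Nat.mod_mul_right_div_self, ← Nat.mod_mul_right_div_self, Nat.mod_mod_of_dvd]
  exact pow_succ 3 i ▸ pow_dvd_pow 3 h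

lemma bad_card_le (k N : ℕ) :
    ((Finset.range N).filter (fun n => 0 ∉ Nat.digits 3 (2 ^ n))).card
      ≤ 2 * (k + 1) + (N / (2 * 3 ^ k) + 1) * 2 ^ (k + 1) := by
  have hsub : (Finset.range N).filter (fun n => 0 ∉ Nat.digits 3 (2 ^ n)) ⊆
      Finset.range (2 * (k + 1)) ∪ (Finset.range N).filter
        (fun n => ∀ i < k + 1, 2 ^ n % 3 ^ (k + 1) / 3 ^ i % 3 ≠ 0) := by
    intro n hn
    simp only [Finset.mem_filter, Finset.mem_range] at hn
    rcases lt_or_ge n (2 * (k + 1)) with h | h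
    · exact Finset.mem_union_left _ (Finset.mem_range.mpr h)
    · refine Finset.mem_union_right _ ?_
      simp only [Finset.mem_filter, Finset.mem_range]
      refine ⟨hn.1, fun i hi => ?_⟩
      rw [mod_digit _ _ _ hi]
      apply digit_ne_zero i (2 ^ n) hn.2
      have h3 : (3:ℕ) ^ i ≤ 2 ^ n := by
        calc (3:ℕ) ^ i ≤ 3 ^ (k + 1) := Nat.pow_le_pow_right (by norm_num) (by omega)
          _ ≤ 4 ^ (k + 1) := Nat.pow_le_pow_left (by norm_num) _
          _ = 2 ^ (2 * (k + 1)) := by rw [pow_mul]; norm_num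
          _ ≤ 2 ^ n := Nat.pow_le_pow_right (by norm_num) h
      exact Nat.div_pos h3 (by positivity)
  refine le_trans (Finset.card_le_card hsub) ?_
  refine le_trans (Finset.card_union_le _ _) ?_
  have := main_bound k N
  rw [Finset.card_range]
  omega

lemma bad_tendsto : Filter.Tendsto (fun N : ℕ =>
    (((Finset.range N).filter fun n => 0 ∉ Nat.digits 3 (2 ^ n)).card : ℝ) / N)
    Filter.atTop (nhds 0) := by
  rw [Metric.tendsto_atTop]
  intro ε hε
  obtain ⟨k, hk⟩ : ∃ k : ℕ, (2:ℝ) ^ (k + 1) / (2 * 3 ^ k) < ε / 2 := by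
    have h23 : Filter.Tendsto (fun k : ℕ => ((2:ℝ) / 3) ^ k) Filter.atTop (nhds 0) :=
      tendsto_pow_atTop_nhds_zero_of_lt_one (by norm_num) (by norm_num)
    obtain ⟨k, hk⟩ := (h23.eventually (gt_mem_nhds (half_pos hε))).exists
    refine ⟨k, ?_⟩
    have heq : (2:ℝ) ^ (k + 1) / (2 * 3 ^ k) = (2 / 3) ^ k := by
      rw [div_pow, pow_succ]
      field_simp
    rw [heq]
    exact hk
  set C : ℝ := 2 * (k + 1) + 2 ^ (k + 1) with hC
  have hCpos : 0 < C := by positivity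
  obtain ⟨N₀, hN₀⟩ := (Filter.eventually_atTop).mp
    (((tendsto_const_div_atTop_nhds_zero_nat C).eventually
        (gt_mem_nhds (half_pos hε))).and (Filter.eventually_ge_atTop 1))
  refine ⟨N₀, fun N hN => ?_⟩
  obtain ⟨hsmall, hN1⟩ := hN₀ N hN
  have hNpos : (0:ℝ) < N := by exact_mod_cast hN1
  rw [Real.dist_eq, sub_zero, abs_of_nonneg (by positivity)]
  set T : ℕ := 2 * 3 ^ k with hT
  have hTpos : (0:ℝ) < T := by positivity
  have hb : (((Finset.range N).filter fun n => 0 ∉ Nat.digits 3 (2 ^ n)).card : ℝ)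
      ≤ C + (N:ℝ) / T * 2 ^ (k + 1) := by
    have h1 : (((Finset.range N).filter fun n => 0 ∉ Nat.digits 3 (2 ^ n)).card : ℝ)
        ≤ ((2 * (k + 1) + (N / T + 1) * 2 ^ (k + 1) : ℕ) : ℝ) := by
      exact_mod_cast bad_card_le k N
    refine h1.trans ?_
    have h2 : ((N / T : ℕ) : ℝ) ≤ (N:ℝ) / (T:ℝ) := Nat.cast_div_le
    have h3 : ((N / T : ℕ) : ℝ) * 2 ^ (k + 1) ≤ (N:ℝ) / (T:ℝ) * 2 ^ (k + 1) :=
      mul_le_mul_of_nonneg_right h2 (by positivity)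
    push_cast
    push_cast at h3
    rw [hC]
    linarith
  have hTval : (T:ℝ) = 2 * 3 ^ k := by rw [hT]; push_cast; ring
  calc (((Finset.range N).filter fun n => 0 ∉ Nat.digits 3 (2 ^ n)).card : ℝ) / N
      ≤ (C + (N:ℝ) / T * 2 ^ (k + 1)) / N := by
        gcongr
    _ = C / N + 2 ^ (k + 1) / T := by field_simp
    _ < ε / 2 + ε / 2 := by
        refine add_lt_add hsmall ?_
        rw [hTval]
        exact hk
    _ = ε := add_halves ε

/-- The set of `n` such that the base-3 expansion of `2^n` contains a digit `0`
has asymptotic density `1`; equivalently, `{n : S_3(2^n) = 0}` has density `1`. -/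
theorem density_zero_digit_pow_two_base_three :
    Tendsto (fun N : ℕ =>
        (((Finset.range N).filter fun n => 0 ∈ Nat.digits 3 (2 ^ n)).card : ℝ) / N)
      atTop (nhds 1) ∧
    Tendsto (fun N : ℕ =>
        (((Finset.range N).filter fun n => sloane 3 (2 ^ n) = 0).card : ℝ) / N)
      atTop (nhds 1) := by
  have hmain : Tendsto (fun N : ℕ =>
      (((Finset.range N).filter fun n => 0 ∈ Nat.digits 3 (2 ^ n)).card : ℝ) / N)
      atTop (nhds 1) := by
    have hlim : Tendsto (fun N : ℕ =>
        1 - (((Finset.range N).filter fun n => 0 ∉ Nat.digits 3 (2 ^ n)).card : ℝ) / N)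
        atTop (nhds 1) := by
      have h1 : Tendsto (fun _ : ℕ => (1:ℝ)) atTop (nhds 1) := tendsto_const_nhds
      have := h1.sub bad_tendsto
      simpa using this
    refine hlim.congr' ?_
    filter_upwards [eventually_ge_atTop 1] with N hN
    have hNpos : (0:ℝ) < N := by exact_mod_cast hN
    have hsum : (((Finset.range N).filter fun n => 0 ∈ Nat.digits 3 (2 ^ n)).card : ℕ)
        + (((Finset.range N).filter fun n => ¬ 0 ∈ Nat.digits 3 (2 ^ n)).card : ℕ) = N := by
      rw [Finset.card_filter_add_card_filter_not, Finset.card_range]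
    have : (((Finset.range N).filter fun n => 0 ∈ Nat.digits 3 (2 ^ n)).card : ℝ)
        = (N : ℝ) - (((Finset.range N).filter fun n => 0 ∉ Nat.digits 3 (2 ^ n)).card : ℝ) := by
      have := hsum
      have hc : ((((Finset.range N).filter fun n => 0 ∈ Nat.digits 3 (2 ^ n)).card : ℕ) : ℝ)
          + ((((Finset.range N).filter fun n => ¬ 0 ∈ Nat.digits 3 (2 ^ n)).card : ℕ) : ℝ) = (N : ℝ) := by
        exact_mod_cast congrArg (Nat.cast : ℕ → ℝ) this
      linarith
    rw [this]
    field_simp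
  refine ⟨hmain, ?_⟩
  have hfun : ∀ N : ℕ, ((Finset.range N).filter fun n => sloane 3 (2 ^ n) = 0)
      = ((Finset.range N).filter fun n => 0 ∈ Nat.digits 3 (2 ^ n)) := by
    intro N
    refine Finset.filter_congr fun n _ => ?_
    simp only [sloane, if_neg (pow_ne_zero n (by norm_num : (2:ℕ) ≠ 0))]
    exact List.prod_eq_zero_iff
  have : (fun N : ℕ =>
      (((Finset.range N).filter fun n => sloane 3 (2 ^ n) = 0).card : ℝ) / N)
      = (fun N : ℕ =>
      (((Finset.range N).filter fun n => 0 ∈ Nat.digits 3 (2 ^ n)).card : ℝ) / N) := by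
    funext N
    rw [hfun N]
  rw [this]
  exact hmain
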